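/- Let σ(x) := 1/(1+e^{−x}) and fix β_g, β_b > 0, δ ∈ (0, 1/4], C ∈ (0,1), and an integer m ≥ β_g σ(β_g C) / (β_b σ(−β_b C)). Define L(Δ) := (1−δ)·log σ(β_g Δ) + δ·log σ(−β_g Δ) + m·log σ(−β_b Δ) for Δ ∈ [−1,1]. Then L is concave on [−1,1], L'(−C) ≤ 0, and consequently every maximizer Δ* of L over [−1,1] satisfies Δ* ≤ −C. -/

import Mathlib

noncomputable def sigm (x : ℝ) : ℝ := (1 + Real.exp (-x))⁻¹

lemma sigm_pos (x : ℝ) : 0 < sigm x := by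
  unfold sigm; positivity

lemma sigm_strictMono : StrictMono sigm := by
  intro x y h
  unfold sigm
  have h1 : (0:ℝ) < 1 + Real.exp (-y) := by positivity
  have h2 : 1 + Real.exp (-y) < 1 + Real.exp (-x) := by
    have := Real.exp_lt_exp.2 (neg_lt_neg h)
    linarith
  exact inv_strictAnti₀ h1 h2

lemma hasDerivAt_log_sigm (x : ℝ) :
    HasDerivAt (fun x => Real.log (sigm x)) (sigm (-x)) x := by
  have h1 : (fun x => Real.log (sigm x)) = fun x => -Real.log (1 + Real.exp (-x)) := by
    funext y
    rw [sigm, Real.log_inv]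
  rw [h1]
  have h2 : HasDerivAt (fun y : ℝ => 1 + Real.exp (-y)) (-Real.exp (-x)) x := by
    simpa using ((Real.hasDerivAt_exp (-x)).comp x (hasDerivAt_neg x)).const_add 1
  have h3 := (h2.log (by positivity)).neg
  refine h3.congr_deriv (Eq.symm ?_)
  rw [sigm, neg_neg]
  rw [Real.exp_neg]
  have he : Real.exp x ≠ 0 := (Real.exp_pos x).ne'
  field_simp
  ring

lemma hasDerivAt_log_sigm_mul (a x : ℝ) :
    HasDerivAt (fun Δ => Real.log (sigm (a * Δ))) (a * sigm (-(a * x))) x := by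
  have h := (hasDerivAt_log_sigm (a * x)).comp x ((hasDerivAt_id x).const_mul a)
  exact h.congr_deriv (by ring)

theorem stmt_14 (βg βb δ C : ℝ) (m : ℕ)
    (hβg : 0 < βg) (hβb : 0 < βb) (hδ : 0 < δ ∧ δ ≤ 1 / 4) (hC : 0 < C ∧ C < 1)
    (hm : βg * sigm (βg * C) / (βb * sigm (-(βb * C))) ≤ (m : ℝ))
    (L : ℝ → ℝ)
    (hL : L = fun Δ => (1 - δ) * Real.log (sigm (βg * Δ))
        + δ * Real.log (sigm (-(βg * Δ))) + (m : ℝ) * Real.log (sigm (-(βb * Δ)))) :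
    ConcaveOn ℝ (Set.Icc (-1 : ℝ) 1) L ∧
    deriv L (-C) ≤ 0 ∧
    ∀ Δstar ∈ Set.Icc (-1 : ℝ) 1,
      IsMaxOn L (Set.Icc (-1 : ℝ) 1) Δstar → Δstar ≤ -C := by
  obtain ⟨hδ0, hδ4⟩ := hδ
  obtain ⟨hC0, hC1⟩ := hC
  set g : ℝ → ℝ := fun x =>
    (1 - δ) * (βg * sigm (-(βg * x))) - δ * (βg * sigm (βg * x))
      - (m : ℝ) * (βb * sigm (βb * x)) with hg
  have hderiv : ∀ x, HasDerivAt L (g x) x := by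
    intro x
    rw [hL]
    have h1 := (hasDerivAt_log_sigm_mul βg x).const_mul (1 - δ)
    have h2 : HasDerivAt (fun Δ => Real.log (sigm (-(βg * Δ))))
        (-βg * sigm (βg * x)) x := by
      have := hasDerivAt_log_sigm_mul (-βg) x
      simp only [neg_mul, neg_neg] at this ⊢
      exact this
    have h3 : HasDerivAt (fun Δ => Real.log (sigm (-(βb * Δ))))
        (-βb * sigm (βb * x)) x := by
      have := hasDerivAt_log_sigm_mul (-βb) x
      simp only [neg_mul, neg_neg] at this ⊢
      exact this
    have h := (h1.add (h2.const_mul δ)).add (h3.const_mul (m : ℝ))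
    refine h.congr_deriv (Eq.symm ?_)
    rw [hg]
    ring
  have hdL : deriv L = g := funext fun x => (hderiv x).deriv
  have hganti : StrictAnti g := by
    intro x y hxy
    have s1 : sigm (-(βg * y)) < sigm (-(βg * x)) :=
      sigm_strictMono (by nlinarith)
    have s2 : sigm (βg * x) < sigm (βg * y) :=
      sigm_strictMono (by nlinarith)
    have s3 : sigm (βb * x) ≤ sigm (βb * y) :=
      (sigm_strictMono (by nlinarith)).le
    have hm0 : (0:ℝ) ≤ (m : ℝ) := Nat.cast_nonneg m
    have h1 : (1 - δ) * (βg * sigm (-(βg * y))) < (1 - δ) * (βg * sigm (-(βg * x))) :=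
      mul_lt_mul_of_pos_left (mul_lt_mul_of_pos_left s1 hβg) (by linarith)
    have h2 : δ * (βg * sigm (βg * x)) < δ * (βg * sigm (βg * y)) :=
      mul_lt_mul_of_pos_left (mul_lt_mul_of_pos_left s2 hβg) hδ0
    have h3 : (m : ℝ) * (βb * sigm (βb * x)) ≤ (m : ℝ) * (βb * sigm (βb * y)) :=
      mul_le_mul_of_nonneg_left (mul_le_mul_of_nonneg_left s3 hβb.le) hm0
    show (1 - δ) * (βg * sigm (-(βg * y))) - δ * (βg * sigm (βg * y))
      - (m : ℝ) * (βb * sigm (βb * y)) < (1 - δ) * (βg * sigm (-(βg * x)))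
      - δ * (βg * sigm (βg * x)) - (m : ℝ) * (βb * sigm (βb * x))
    linarith
  have hdiff : Differentiable ℝ L := fun x => (hderiv x).differentiableAt
  have hconc : ConcaveOn ℝ (Set.Icc (-1 : ℝ) 1) L := by
    apply AntitoneOn.concaveOn_of_deriv (convex_Icc _ _) hdiff.continuous.continuousOn
      (hdiff.differentiableOn)
    intro a _ b _ hab
    rw [hdL]
    exact (hganti.antitone) hab
  have hgC : g (-C) ≤ 0 := by
    have hd : (0:ℝ) < βb * sigm (-(βb * C)) := mul_pos hβb (sigm_pos _)
    have hm' : βg * sigm (βg * C) ≤ (m : ℝ) * (βb * sigm (-(βb * C))) := by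
      rw [div_le_iff₀ hd] at hm
      linarith
    rw [hg]
    simp only [mul_neg, neg_neg]
    have p1 : 0 < βg * sigm (βg * C) := mul_pos hβg (sigm_pos _)
    have p2 : 0 < βg * sigm (-(βg * C)) := mul_pos hβg (sigm_pos _)
    nlinarith [mul_nonneg hδ0.le p1.le, mul_nonneg hδ0.le p2.le]
  refine ⟨hconc, by rw [hdL]; exact hgC, ?_⟩
  intro Δs hΔs hmax
  by_contra hgt
  push_neg at hgt
  have hCmem : -C ∈ Set.Icc (-1 : ℝ) 1 := by
    constructor <;> [linarith; linarith]
  -- MVT on [-C, Δs]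
  obtain ⟨c, hc, hslope⟩ := exists_hasDerivAt_eq_slope L g hgt
    (hdiff.continuous.continuousOn) (fun x _ => hderiv x)
  have hgc : g c < g (-C) := hganti hc.1
  have hLlt : L Δs < L (-C) := by
    have hpos : (0:ℝ) < Δs - (-C) := by linarith
    have : (L Δs - L (-C)) / (Δs - (-C)) < 0 := by
      rw [← hslope]
      linarith
    have := (div_neg_iff.mp this)
    rcases this with ⟨h1, h2⟩ | ⟨h1, h2⟩
    · linarith
    · linarith
  exact absurd (hmax hCmem) (not_le.mpr hLlt)
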